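/- Define f_U(q_b) = (q_b² q' - q)/((q_b - q)(1 - q_b q')) and f_V(q_b) = -[(1-q')/(1-q_b q')]·q_b/(1-q_b) for q < q_b < 1. Then f_U(q_b) < f_V(q_b) for q_b < √q, f_U(q_b) > f_V(q_b) for q_b > √q, and f_U(√q) = f_V(√q). Moreover f_U(q_b) → -∞ as q_b → q⁺ and f_V(q_b) → -∞ as q_b → 1⁻. -/

import Mathlib

open Filter Set

/-- Properties of the mean boundary energies of the Bernoulli-Geometric polymer,
`f_U(q_b) = (q_b² q' - q)/((q_b - q)(1 - q_b q'))` and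
`f_V(q_b) = -[(1-q')/(1-q_b q')]·q_b/(1-q_b)` on `(q,1)`:
`f_U < f_V` for `q_b < √q`, `f_U > f_V` for `q_b > √q`, equality at `q_b = √q`,
`f_U → -∞` as `q_b → q⁺` and `f_V → -∞` as `q_b → 1⁻`. -/
theorem BG_boundary_energies_properties (q q' : ℝ)
    (h0q : 0 < q) (hq1 : q < 1) (h0q' : 0 ≤ q') (hq'1 : q' < 1) :
    (∀ qb ∈ Ioo q 1, qb < Real.sqrt q →
      (qb ^ 2 * q' - q) / ((qb - q) * (1 - qb * q'))
        < -((1 - q') / (1 - qb * q')) * (qb / (1 - qb))) ∧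
    (∀ qb ∈ Ioo q 1, Real.sqrt q < qb →
      -((1 - q') / (1 - qb * q')) * (qb / (1 - qb))
        < (qb ^ 2 * q' - q) / ((qb - q) * (1 - qb * q'))) ∧
    ((Real.sqrt q ^ 2 * q' - q) / ((Real.sqrt q - q) * (1 - Real.sqrt q * q'))
      = -((1 - q') / (1 - Real.sqrt q * q')) * (Real.sqrt q / (1 - Real.sqrt q))) ∧
    Tendsto (fun qb => (qb ^ 2 * q' - q) / ((qb - q) * (1 - qb * q')))
      (nhdsWithin q (Ioi q)) atBot ∧
    Tendsto (fun qb => -((1 - q') / (1 - qb * q')) * (qb / (1 - qb)))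
      (nhdsWithin 1 (Iio 1)) atBot := by
  -- basic facts valid for `qb ∈ Ioo q 1`
  have key : ∀ qb ∈ Ioo q 1,
      (qb ^ 2 * q' - q) / ((qb - q) * (1 - qb * q'))
        - (-((1 - q') / (1 - qb * q')) * (qb / (1 - qb)))
        = (qb ^ 2 - q) / ((qb - q) * (1 - qb)) := by
    intro qb ⟨h1, h2⟩
    have hq0 : 0 < qb := h0q.trans h1
    have hd1 : qb - q ≠ 0 := by linarith
    have hd2 : (1 : ℝ) - qb ≠ 0 := by linarith
    have hqq' : qb * q' < 1 := by
      calc qb * q' ≤ qb * 1 := by nlinarith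
        _ < 1 := by linarith
    have hd3 : (1 : ℝ) - qb * q' ≠ 0 := by linarith
    field_simp
    ring
  refine ⟨?_, ?_, ?_, ?_, ?_⟩
  · intro qb hqb hlt
    have hk := key qb hqb
    obtain ⟨h1, h2⟩ := hqb
    have hq0 : 0 ≤ qb := le_of_lt (h0q.trans h1)
    have hnum : qb ^ 2 - q < 0 := by
      have := (Real.lt_sqrt hq0).mp hlt; linarith
    have hden : 0 < (qb - q) * (1 - qb) := by
      apply mul_pos <;> linarith
    have : (qb ^ 2 - q) / ((qb - q) * (1 - qb)) < 0 :=
      div_neg_of_neg_of_pos hnum hden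
    linarith [hk]
  · intro qb hqb hlt
    have hk := key qb hqb
    obtain ⟨h1, h2⟩ := hqb
    have hq0 : 0 < qb := h0q.trans h1
    have hnum : 0 < qb ^ 2 - q := by
      have := (Real.sqrt_lt' hq0).mp hlt; linarith
    have hden : 0 < (qb - q) * (1 - qb) := by
      apply mul_pos <;> linarith
    have : 0 < (qb ^ 2 - q) / ((qb - q) * (1 - qb)) :=
      div_pos hnum hden
    linarith [hk]
  · set s := Real.sqrt q with hs
    have hs2 : s ^ 2 = q := Real.sq_sqrt h0q.le
    have hs0 : 0 < s := Real.sqrt_pos.mpr h0q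
    have hs1 : s < 1 := by
      rw [hs, show (1:ℝ) = Real.sqrt 1 by simp]
      exact Real.sqrt_lt_sqrt h0q.le hq1
    have hsq : q < s := by nlinarith
    have hd1 : s - q ≠ 0 := by linarith
    have hd2 : (1 : ℝ) - s ≠ 0 := by linarith
    have hsq' : s * q' < 1 := by nlinarith
    have hd3 : (1 : ℝ) - s * q' ≠ 0 := by linarith
    field_simp
    linear_combination ((1 - s * q') * (q' * (1 - s) + (1 - q')) + s * q' * (1 - s * q')) * hs2
  · -- f_U → -∞ as qb → q⁺
    have hev : ∀ᶠ qb in nhdsWithin q (Ioi q), qb ∈ Ioo q 1 := by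
      filter_upwards [Ioo_mem_nhdsGT_of_mem (by constructor <;> linarith : q ∈ Ico q 1)]
        with x hx using hx
    have hnum : Tendsto (fun qb : ℝ => qb ^ 2 * q' - q) (nhdsWithin q (Ioi q))
        (nhds (q ^ 2 * q' - q)) := by
      apply Tendsto.mono_left _ nhdsWithin_le_nhds
      exact (continuous_pow 2 |>.mul continuous_const |>.sub continuous_const).tendsto q
    have hC : q ^ 2 * q' - q < 0 := by nlinarith
    have hden : Tendsto (fun qb : ℝ => ((qb - q) * (1 - qb * q'))⁻¹)
        (nhdsWithin q (Ioi q)) atTop := by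
      apply tendsto_inv_nhdsGT_zero.comp
      rw [tendsto_nhdsWithin_iff]
      constructor
      · have : Tendsto (fun qb : ℝ => (qb - q) * (1 - qb * q')) (nhdsWithin q (Ioi q))
            (nhds ((q - q) * (1 - q * q'))) := by
          apply Tendsto.mono_left _ nhdsWithin_le_nhds
          exact ((continuous_id.sub continuous_const).mul
            (continuous_const.sub (continuous_id.mul continuous_const))).tendsto q
        simpa using this
      · filter_upwards [hev] with x ⟨h1, h2⟩
        have hx0 : 0 < x := h0q.trans h1
        have : x * q' < 1 := by nlinarith
        have : 0 < (x - q) * (1 - x * q') := mul_pos (by linarith) (by linarith)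
        exact this
    have := hnum.neg_mul_atTop hC hden
    apply this.congr
    intro x
    rw [div_eq_mul_inv]
  · -- f_V → -∞ as qb → 1⁻
    have hev : ∀ᶠ qb in nhdsWithin (1:ℝ) (Iio 1), qb ∈ Ioo (0:ℝ) 1 := by
      filter_upwards [Ioo_mem_nhdsLT_of_mem (by constructor <;> linarith : (1:ℝ) ∈ Ioc (0:ℝ) 1)]
        with x hx using hx
    have hA : Tendsto (fun qb : ℝ => -((1 - q') / (1 - qb * q')) * qb)
        (nhdsWithin (1:ℝ) (Iio 1)) (nhds (-1)) := by
      have hc : Tendsto (fun qb : ℝ => -((1 - q') / (1 - qb * q')) * qb) (nhds 1)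
          (nhds (-((1 - q') / (1 - 1 * q')) * 1)) := by
        apply Tendsto.mul _ (continuous_id.tendsto 1)
        apply Tendsto.neg
        apply Tendsto.div tendsto_const_nhds
          ((continuous_const.sub (continuous_id.mul continuous_const)).tendsto 1)
        simp; linarith
      have : -((1 - q') / (1 - 1 * q')) * 1 = -1 := by
        rw [one_mul, div_self (by linarith)]; ring
      rw [this] at hc
      exact hc.mono_left nhdsWithin_le_nhds
    have hB : Tendsto (fun qb : ℝ => (1 - qb)⁻¹) (nhdsWithin (1:ℝ) (Iio 1)) atTop := by
      apply tendsto_inv_nhdsGT_zero.comp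
      rw [tendsto_nhdsWithin_iff]
      constructor
      · have : Tendsto (fun qb : ℝ => 1 - qb) (nhds (1:ℝ)) (nhds (1 - 1)) :=
          (continuous_const.sub continuous_id).tendsto 1
        simpa using this.mono_left nhdsWithin_le_nhds
      · filter_upwards [hev] with x ⟨_, h2⟩
        exact sub_pos.mpr h2
    have := hA.neg_mul_atTop (by norm_num : (-1:ℝ) < 0) hB
    apply this.congr
    intro x
    ring
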